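/- Let b : ℝⁿ × ℝⁿ → ℝ be C² and suppose at a point (x₀,y₀) the mixed second derivative matrix D²ₓᵧb(x₀,y₀) equals the identity. Then for every ε > 0 there is a convex neighbourhood N of (x₀,y₀) such that any two points (x,y), (x',y') in N satisfying b(x,y) + b(x',y') ≥ b(x,y') + b(x',y) also satisfy (x'-x)·(y'-y) ≥ -ε|x'-x||y'-y|. -/

import Mathlib

open scoped RealInnerProductSpace



variable {E F G : Type*} [NormedAddCommGroup E] [NormedSpace ℝ E]
  [NormedAddCommGroup F] [NormedSpace ℝ F] [NormedAddCommGroup G] [NormedSpace ℝ G]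

lemma aux_fderiv_partial_snd (f : E × F → G) (hf : Differentiable ℝ f) (x : E) (y : F) :
    fderiv ℝ (fun y' => f (x, y')) y
      = (fderiv ℝ f (x, y)).comp (ContinuousLinearMap.inr ℝ E F) :=
  ((hf (x, y)).hasFDerivAt.comp y (hasFDerivAt_prodMk_right x y)).fderiv

lemma aux_second_partial_eq (f : E × F → G) (hf : ContDiff ℝ 2 f) (x₀ : E) (y₀ : F)
    (v : E) (w : F) :
    fderiv ℝ (fun x => fderiv ℝ (fun y => f (x, y)) y₀ w) x₀ v
      = fderiv ℝ (fderiv ℝ f) (x₀, y₀) (v, 0) (0, w) := by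
  have hdf : Differentiable ℝ f := hf.differentiable (by norm_num)
  have h1 : (fun x => fderiv ℝ (fun y => f (x, y)) y₀ w)
      = fun x => fderiv ℝ f (x, y₀) (0, w) := by
    funext x
    rw [aux_fderiv_partial_snd f hdf x y₀]
    rfl
  rw [h1]
  have hC1 : ContDiff ℝ 1 (fderiv ℝ f) := hf.fderiv_right (by norm_num)
  have h2 : HasFDerivAt (fderiv ℝ f) (fderiv ℝ (fderiv ℝ f) (x₀, y₀)) (x₀, y₀) :=
    ((hC1.differentiable (by norm_num)) (x₀, y₀)).hasFDerivAt
  have h3 := ((ContinuousLinearMap.apply ℝ G ((0, w) : E × F)).hasFDerivAt).comp x₀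
    (h2.comp x₀ (hasFDerivAt_prodMk_left x₀ y₀))
  have h3' : HasFDerivAt (fun x => fderiv ℝ f (x, y₀) (0, w))
      (((ContinuousLinearMap.apply ℝ G) ((0, w) : E × F)).comp
        ((fderiv ℝ (fderiv ℝ f) (x₀, y₀)).comp (ContinuousLinearMap.inl ℝ E F))) x₀ := h3
  rw [h3'.fderiv]
  rfl


variable {E F : Type*} [NormedAddCommGroup E] [NormedSpace ℝ E]
  [NormedAddCommGroup F] [NormedSpace ℝ F]

lemma aux_cross_diff_bound (φ : E × F → ℝ) (hφ : ContDiff ℝ 2 φ) (c : E × F) (r ε : ℝ)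
    (hε : 0 ≤ ε)
    (hbound : ∀ z ∈ Metric.ball c r, ∀ (u : E) (v : F),
      |fderiv ℝ (fderiv ℝ φ) z (u, 0) (0, v)| ≤ ε * ‖u‖ * ‖v‖)
    (p q : E × F) (hp : p ∈ Metric.ball c r) (hq : q ∈ Metric.ball c r) :
    |φ p + φ q - φ (p.1, q.2) - φ (q.1, p.2)| ≤ ε * ‖q.1 - p.1‖ * ‖q.2 - p.2‖ := by
  have hdφ : Differentiable ℝ φ := hφ.differentiable (by norm_num)
  have hC1 : ContDiff ℝ 1 (fderiv ℝ φ) := hφ.fderiv_right (by norm_num)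
  have hd2 : Differentiable ℝ (fderiv ℝ φ) := hC1.differentiable (by norm_num)
  have hsymm : ∀ z : E × F, ∀ a b : E × F,
      fderiv ℝ (fderiv ℝ φ) z a b = fderiv ℝ (fderiv ℝ φ) z b a :=
    fun z => (hφ.contDiffAt.isSymmSndFDerivAt (by simp))
  -- product ball
  have hball : Metric.ball c r = Metric.ball c.1 r ×ˢ Metric.ball c.2 r := by
    rw [← ball_prod_same]
  have hp1 : p.1 ∈ Metric.ball c.1 r := by rw [hball] at hp; exact hp.1
  have hp2 : p.2 ∈ Metric.ball c.2 r := by rw [hball] at hp; exact hp.2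
  have hq1 : q.1 ∈ Metric.ball c.1 r := by rw [hball] at hq; exact hq.1
  have hq2 : q.2 ∈ Metric.ball c.2 r := by rw [hball] at hq; exact hq.2
  -- outer function
  set G : E → ℝ := fun z => φ (z, q.2) - φ (z, p.2) with hG
  set G' : E → (E →L[ℝ] ℝ) := fun z =>
    ((fderiv ℝ φ (z, q.2)) - (fderiv ℝ φ (z, p.2))).comp (ContinuousLinearMap.inl ℝ E F)
    with hG'
  have hGderiv : ∀ z ∈ Metric.ball c.1 r, HasFDerivWithinAt G (G' z) (Metric.ball c.1 r) z := by
    intro z _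
    have h1 : HasFDerivAt (fun z : E => φ (z, q.2))
        ((fderiv ℝ φ (z, q.2)).comp (ContinuousLinearMap.inl ℝ E F)) z :=
      ((hdφ (z, q.2)).hasFDerivAt.comp z (hasFDerivAt_prodMk_left z q.2))
    have h2 : HasFDerivAt (fun z : E => φ (z, p.2))
        ((fderiv ℝ φ (z, p.2)).comp (ContinuousLinearMap.inl ℝ E F)) z :=
      ((hdφ (z, p.2)).hasFDerivAt.comp z (hasFDerivAt_prodMk_left z p.2))
    have := h1.sub h2
    rw [← ContinuousLinearMap.sub_comp] at this
    exact this.hasFDerivWithinAt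
  have hGbound : ∀ z ∈ Metric.ball c.1 r, ‖G' z‖ ≤ ε * ‖q.2 - p.2‖ := by
    intro z hz
    apply ContinuousLinearMap.opNorm_le_bound _ (by positivity)
    intro u
    -- inner function
    set K : F → ℝ := fun w => fderiv ℝ φ (z, w) (u, 0) with hK
    set K' : F → (F →L[ℝ] ℝ) := fun w =>
      ((ContinuousLinearMap.apply ℝ ℝ ((u, 0) : E × F)).comp
        ((fderiv ℝ (fderiv ℝ φ) (z, w)).comp (ContinuousLinearMap.inr ℝ E F))) with hK'
    have hKderiv : ∀ w ∈ Metric.ball c.2 r,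
        HasFDerivWithinAt K (K' w) (Metric.ball c.2 r) w := by
      intro w _
      have h4 := ((ContinuousLinearMap.apply ℝ ℝ ((u, 0) : E × F)).hasFDerivAt).comp w
        (((hd2 (z, w)).hasFDerivAt).comp w (hasFDerivAt_prodMk_right z w))
      exact (HasFDerivAt.hasFDerivWithinAt h4)
    have hKbound : ∀ w ∈ Metric.ball c.2 r, ‖K' w‖ ≤ ε * ‖u‖ := by
      intro w hw
      apply ContinuousLinearMap.opNorm_le_bound _ (by positivity)
      intro v
      have hzw : (z, w) ∈ Metric.ball c r := by
        rw [hball]; exact ⟨hz, hw⟩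
      have : K' w v = fderiv ℝ (fderiv ℝ φ) (z, w) (u, 0) (0, v) := by
        simp [hK', hsymm (z, w) ((0 : E), v) (u, (0 : F))]
      rw [this]
      calc |fderiv ℝ (fderiv ℝ φ) (z, w) (u, 0) (0, v)| ≤ ε * ‖u‖ * ‖v‖ :=
            hbound (z, w) hzw u v
        _ = ε * ‖u‖ * ‖v‖ := rfl
    have hMVT2 := (convex_ball c.2 r).norm_image_sub_le_of_norm_hasFDerivWithin_le
      hKderiv hKbound hp2 hq2
    -- hMVT2 : ‖K q.2 - K p.2‖ ≤ ε * ‖u‖ * ‖q.2 - p.2‖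
    have hval : G' z u = K q.2 - K p.2 := by simp [hG', hK]
    rw [hval]
    calc ‖K q.2 - K p.2‖ ≤ ε * ‖u‖ * ‖q.2 - p.2‖ := hMVT2
      _ = ε * ‖q.2 - p.2‖ * ‖u‖ := by ring
  have hMVT1 := (convex_ball c.1 r).norm_image_sub_le_of_norm_hasFDerivWithin_le
    hGderiv hGbound hp1 hq1
  -- hMVT1 : ‖G q.1 - G p.1‖ ≤ ε * ‖q.2 - p.2‖ * ‖q.1 - p.1‖
  have : φ p + φ q - φ (p.1, q.2) - φ (q.1, p.2) = G q.1 - G p.1 := by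
    simp only [hG]; ring_nf
  rw [this]
  calc |G q.1 - G p.1| ≤ ε * ‖q.2 - p.2‖ * ‖q.1 - p.1‖ := hMVT1
    _ = ε * ‖q.1 - p.1‖ * ‖q.2 - p.2‖ := by ring


theorem bmonotone_almost_monotone_near_identity_point (n : ℕ)
    (b : EuclideanSpace ℝ (Fin n) × EuclideanSpace ℝ (Fin n) → ℝ)
    (hb : ContDiff ℝ 2 b)
    (x₀ y₀ : EuclideanSpace ℝ (Fin n))
    (hId : ∀ v w : EuclideanSpace ℝ (Fin n),
      fderiv ℝ (fun x => fderiv ℝ (fun y => b (x, y)) y₀ w) x₀ v = ⟪v, w⟫) :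
    ∀ ε > (0 : ℝ), ∃ N : Set (EuclideanSpace ℝ (Fin n) × EuclideanSpace ℝ (Fin n)),
      IsOpen N ∧ Convex ℝ N ∧ (x₀, y₀) ∈ N ∧
      ∀ p ∈ N, ∀ q ∈ N,
        b p + b q ≥ b (p.1, q.2) + b (q.1, p.2) →
        ⟪q.1 - p.1, q.2 - p.2⟫ ≥ -ε * ‖q.1 - p.1‖ * ‖q.2 - p.2‖ := by
  intro ε hε
  set B : EuclideanSpace ℝ (Fin n) × EuclideanSpace ℝ (Fin n) → ℝ := fun p => b p - ⟪p.1, p.2⟫ with hBdef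
  have hdb : Differentiable ℝ b := hb.differentiable (by norm_num)
  have hB : ContDiff ℝ 2 B := hb.sub (contDiff_fst.inner ℝ contDiff_snd)
  -- second mixed derivative of B vanishes at (x₀, y₀)
  have hB0 : ∀ v w : EuclideanSpace ℝ (Fin n), fderiv ℝ (fderiv ℝ B) (x₀, y₀) (v, 0) (0, w) = 0 := by
    intro v w
    rw [← aux_second_partial_eq B hB x₀ y₀ v w]
    have hpart : ∀ x : EuclideanSpace ℝ (Fin n), fderiv ℝ (fun y => B (x, y)) y₀ w
        = fderiv ℝ (fun y => b (x, y)) y₀ w - ⟪x, w⟫ := by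
      intro x
      have hdbx : DifferentiableAt ℝ (fun y : EuclideanSpace ℝ (Fin n) => b (x, y)) y₀ :=
        (hdb (x, y₀)).comp y₀ ((differentiableAt_const x).prodMk differentiableAt_id)
      have hdix : DifferentiableAt ℝ (fun y : EuclideanSpace ℝ (Fin n) => (⟪x, y⟫ : ℝ)) y₀ :=
        ((differentiable_const x).inner ℝ differentiable_id) y₀
      have hsplit : (fun y => B (x, y)) = fun y : EuclideanSpace ℝ (Fin n) => b (x, y) - ⟪x, y⟫ := rfl
      rw [hsplit, fderiv_fun_sub hdbx hdix]
      have hinnerSL : (fun y : EuclideanSpace ℝ (Fin n) => (⟪x, y⟫ : ℝ)) = innerSL ℝ x := rfl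
      rw [ContinuousLinearMap.sub_apply, hinnerSL, ContinuousLinearMap.fderiv]
      rfl
    have hfunsub : (fun x => fderiv ℝ (fun y => B (x, y)) y₀ w)
        = fun x : EuclideanSpace ℝ (Fin n) => fderiv ℝ (fun y => b (x, y)) y₀ w - ⟪x, w⟫ := funext hpart
    rw [hfunsub]
    -- differentiability of the first summand
    have hA : (fun x : EuclideanSpace ℝ (Fin n) => fderiv ℝ (fun y => b (x, y)) y₀ w)
        = fun x : EuclideanSpace ℝ (Fin n) => fderiv ℝ b (x, y₀) (0, w) := by
      funext x
      rw [aux_fderiv_partial_snd b hdb x y₀]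
      rfl
    have hd2b : Differentiable ℝ (fderiv ℝ b) :=
      (hb.fderiv_right (m := 1) (by norm_num)).differentiable (by norm_num)
    have hdA : DifferentiableAt ℝ (fun x : EuclideanSpace ℝ (Fin n) => fderiv ℝ (fun y => b (x, y)) y₀ w) x₀ := by
      rw [hA]
      exact ((ContinuousLinearMap.apply ℝ ℝ ((((0 : EuclideanSpace ℝ (Fin n))), w) : EuclideanSpace ℝ (Fin n) × EuclideanSpace ℝ (Fin n))).differentiable.comp
        (hd2b.comp (differentiable_id.prodMk (differentiable_const y₀)))) x₀
    have hdC : DifferentiableAt ℝ (fun x : EuclideanSpace ℝ (Fin n) => (⟪x, w⟫ : ℝ)) x₀ :=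
      (differentiable_id.inner ℝ (differentiable_const w)) x₀
    rw [fderiv_fun_sub hdA hdC, ContinuousLinearMap.sub_apply, hId v w]
    have hC : (fun x : EuclideanSpace ℝ (Fin n) => (⟪x, w⟫ : ℝ)) = innerSL ℝ w := by
      funext x; exact real_inner_comm w x
    rw [hC, ContinuousLinearMap.fderiv]
    have : (innerSL ℝ w) v = ⟪v, w⟫ := real_inner_comm v w
    rw [this, sub_self]
  -- choose a ball where the second mixed derivative is ε-small
  have hgc : Continuous (fderiv ℝ (fderiv ℝ B)) :=
    (hB.fderiv_right (m := 1) (by norm_num)).continuous_fderiv one_ne_zero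
  obtain ⟨r, hr, hrad⟩ := (Metric.continuousAt_iff (f := fderiv ℝ (fderiv ℝ B)) (a := (x₀, y₀))).1 hgc.continuousAt ε hε
  refine ⟨Metric.ball ((x₀, y₀) : EuclideanSpace ℝ (Fin n) × EuclideanSpace ℝ (Fin n)) r, Metric.isOpen_ball, convex_ball _ _,
    Metric.mem_ball_self hr, ?_⟩
  intro p hp q hq hm
  have hbound : ∀ z ∈ Metric.ball ((x₀, y₀) : EuclideanSpace ℝ (Fin n) × EuclideanSpace ℝ (Fin n)) r, ∀ (u v : EuclideanSpace ℝ (Fin n)),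
      |fderiv ℝ (fderiv ℝ B) z (u, 0) (0, v)| ≤ ε * ‖u‖ * ‖v‖ := by
    intro z hz u v
    have hlt : ‖fderiv ℝ (fderiv ℝ B) z - fderiv ℝ (fderiv ℝ B) (x₀, y₀)‖ < ε := by
      have h := hrad hz
      exact lt_of_eq_of_lt (dist_eq_norm (fderiv ℝ (fderiv ℝ B) z) (fderiv ℝ (fderiv ℝ B) (x₀, y₀))).symm h
    have heq : fderiv ℝ (fderiv ℝ B) z (u, 0) (0, v)
        = (fderiv ℝ (fderiv ℝ B) z - fderiv ℝ (fderiv ℝ B) (x₀, y₀)) (u, 0) (0, v) := by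
      rw [ContinuousLinearMap.sub_apply, ContinuousLinearMap.sub_apply, hB0 u v, sub_zero]
    rw [heq, ← Real.norm_eq_abs]
    have hn1 : ‖((u, (0 : EuclideanSpace ℝ (Fin n))) : EuclideanSpace ℝ (Fin n) × EuclideanSpace ℝ (Fin n))‖ = ‖u‖ := by
      rw [Prod.norm_def]; simp
    have hn2 : ‖((((0 : EuclideanSpace ℝ (Fin n))), v) : EuclideanSpace ℝ (Fin n) × EuclideanSpace ℝ (Fin n))‖ = ‖v‖ := by
      rw [Prod.norm_def]; simp
    calc ‖(fderiv ℝ (fderiv ℝ B) z - fderiv ℝ (fderiv ℝ B) (x₀, y₀)) (u, 0) (0, v)‖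
        ≤ ‖fderiv ℝ (fderiv ℝ B) z - fderiv ℝ (fderiv ℝ B) (x₀, y₀)‖
          * ‖((u, (0 : EuclideanSpace ℝ (Fin n))) : EuclideanSpace ℝ (Fin n) × EuclideanSpace ℝ (Fin n))‖ * ‖((((0 : EuclideanSpace ℝ (Fin n))), v) : EuclideanSpace ℝ (Fin n) × EuclideanSpace ℝ (Fin n))‖ :=
          ContinuousLinearMap.le_opNorm₂ _ _ _
      _ ≤ ε * ‖((u, (0 : EuclideanSpace ℝ (Fin n))) : EuclideanSpace ℝ (Fin n) × EuclideanSpace ℝ (Fin n))‖ * ‖((((0 : EuclideanSpace ℝ (Fin n))), v) : EuclideanSpace ℝ (Fin n) × EuclideanSpace ℝ (Fin n))‖ :=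
          mul_le_mul_of_nonneg_right
            (mul_le_mul_of_nonneg_right hlt.le (norm_nonneg _)) (norm_nonneg _)
      _ = ε * ‖u‖ * ‖v‖ := by rw [hn1, hn2]
  have hkey := aux_cross_diff_bound B hB ((x₀, y₀) : EuclideanSpace ℝ (Fin n) × EuclideanSpace ℝ (Fin n)) r ε hε.le hbound p q hp hq
  have hexp : B p + B q - B (p.1, q.2) - B (q.1, p.2)
      = (b p + b q - b (p.1, q.2) - b (q.1, p.2)) - ⟪q.1 - p.1, q.2 - p.2⟫ := by
    simp only [hBdef, inner_sub_left, inner_sub_right]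
    ring
  have habs := abs_le.1 hkey
  have hS : b p + b q - b (p.1, q.2) - b (q.1, p.2) ≥ 0 := by linarith [hm]
  linarith [habs.2, hexp, hS]
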